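/- (Drift of the ratio.) For the two-strain stochastic SIS competition chain with μ_1 = μ_2 = 1, the generator applied to the function Q(X_1, X_2) = X_1/X_2 at a state with X_2 ≥ 2 and X_1 + X_2 ≤ N equals g_N(X) = (1 - X_1/N - X_2/N)(λ_1 X_1/X_2 - λ_2 X_1/(X_2+1)) - X_1/X_2 + X_1/(X_2-1); moreover if λ_1 > λ_2 then g_N(X) ≥ 0, and g_N(X) ≤ (X_1/X_2)(λ_1 - λ_2 + λ_2/(X_2+1) + 1/(X_2-1)). -/

import Mathlib

/-- Generator of the two-strain SIS competition chain applied to `Q(X₁,X₂) = X₁/X₂`: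
the sum over transitions of rate × (change in `Q`). -/
noncomputable def ratioDrift (N X1 X2 : ℕ) (lam1 lam2 : ℝ) : ℝ :=
  lam1 * X1 * (1 - (X1 : ℝ) / N - (X2 : ℝ) / N) * (((X1 : ℝ) + 1) / X2 - (X1 : ℝ) / X2)
    + lam2 * X2 * (1 - (X1 : ℝ) / N - (X2 : ℝ) / N)
        * ((X1 : ℝ) / ((X2 : ℝ) + 1) - (X1 : ℝ) / X2)
    + X1 * (((X1 : ℝ) - 1) / X2 - (X1 : ℝ) / X2)
    + X2 * ((X1 : ℝ) / ((X2 : ℝ) - 1) - (X1 : ℝ) / X2)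

/-- Drift of the ratio `Q = X₁/X₂` in the two-strain SIS competition chain with
`μ₁ = μ₂ = 1`: at a state with `X₂ ≥ 2` and `X₁ + X₂ ≤ N` the generator applied to `Q`
equals `(1 - X₁/N - X₂/N)(λ₁X₁/X₂ - λ₂X₁/(X₂+1)) - X₁/X₂ + X₁/(X₂-1)`; moreover, if
`λ₁ > λ₂` then it is nonnegative and at most
`(X₁/X₂)(λ₁ - λ₂ + λ₂/(X₂+1) + 1/(X₂-1))`. -/
theorem sis_ratio_drift
    (N X1 X2 : ℕ) (lam1 lam2 : ℝ) (hN : 0 < N) (hlam2 : 0 < lam2)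
    (hX2 : 2 ≤ X2) (hsum : X1 + X2 ≤ N) :
    ratioDrift N X1 X2 lam1 lam2
        = (1 - (X1 : ℝ) / N - (X2 : ℝ) / N)
            * (lam1 * X1 / X2 - lam2 * X1 / ((X2 : ℝ) + 1))
          - (X1 : ℝ) / X2 + (X1 : ℝ) / ((X2 : ℝ) - 1) ∧
    (lam2 < lam1 →
      0 ≤ ratioDrift N X1 X2 lam1 lam2 ∧
      ratioDrift N X1 X2 lam1 lam2
        ≤ ((X1 : ℝ) / X2) * (lam1 - lam2 + lam2 / ((X2 : ℝ) + 1) + 1 / ((X2 : ℝ) - 1))) := by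
  have h2 : (2:ℝ) ≤ (X2:ℝ) := by exact_mod_cast hX2
  have hx2 : (0:ℝ) < X2 := by linarith
  have hx2m : (0:ℝ) < (X2:ℝ) - 1 := by linarith
  have hx2p : (0:ℝ) < (X2:ℝ) + 1 := by linarith
  have hN' : (0:ℝ) < N := by exact_mod_cast hN
  have hsum' : (X1:ℝ) + (X2:ℝ) ≤ N := by exact_mod_cast hsum
  have hx1 : (0:ℝ) ≤ X1 := Nat.cast_nonneg _
  have hp0 : 0 ≤ 1 - (X1:ℝ)/N - (X2:ℝ)/N := by
    have h : (X1:ℝ)/N + (X2:ℝ)/N ≤ 1 := by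
      rw [← add_div]; exact (div_le_one hN').mpr hsum'
    linarith
  have hp1 : 1 - (X1:ℝ)/N - (X2:ℝ)/N ≤ 1 := by
    have h1 := div_nonneg hx1 hN'.le
    have h2 := div_nonneg (Nat.cast_nonneg X2 : (0:ℝ) ≤ X2) hN'.le
    linarith
  have heq : ratioDrift N X1 X2 lam1 lam2
      = (1 - (X1 : ℝ) / N - (X2 : ℝ) / N)
          * (lam1 * X1 / X2 - lam2 * X1 / ((X2 : ℝ) + 1))
        - (X1 : ℝ) / X2 + (X1 : ℝ) / ((X2 : ℝ) - 1) := by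
    unfold ratioDrift
    field_simp
    ring
  refine ⟨heq, fun hlt => ?_⟩
  have hA : 0 ≤ lam1 * X1 / X2 - lam2 * X1 / ((X2:ℝ) + 1) := by
    rw [sub_nonneg, div_le_div_iff₀ hx2p hx2]
    nlinarith [mul_nonneg hx1 hx2.le, mul_nonneg hx1 (le_of_lt hlam2)]
  have hB : (X1:ℝ)/X2 ≤ (X1:ℝ)/((X2:ℝ)-1) := by
    rw [div_le_div_iff₀ hx2 hx2m]
    nlinarith
  constructor
  · rw [heq]
    have := mul_nonneg hp0 hA
    linarith
  · rw [heq]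
    have hEq2 : (lam1 * X1 / X2 - lam2 * X1 / ((X2:ℝ) + 1)) - (X1:ℝ)/X2 + (X1:ℝ)/((X2:ℝ)-1)
        = ((X1 : ℝ) / X2) * (lam1 - lam2 + lam2 / ((X2 : ℝ) + 1) + 1 / ((X2 : ℝ) - 1)) := by
      field_simp
      ring
    have hle : (1 - (X1:ℝ)/N - (X2:ℝ)/N) * (lam1 * X1 / X2 - lam2 * X1 / ((X2:ℝ) + 1))
        ≤ 1 * (lam1 * X1 / X2 - lam2 * X1 / ((X2:ℝ) + 1)) :=
      mul_le_mul_of_nonneg_right hp1 hA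
    linarith
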